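/- Let r₁, r₂, r₃, ν₁₂, ν₃ be positive real numbers. Then the 5×5 matrix D with rows (0,0,1,1,0), (1,1,0,0,1), (−r₂, r₂, ν₁₂, −ν₁₂, 0), (r₁, r₁, 0, 0, −r₃), (−ν₁₂, ν₁₂, −r₂, r₂, −ν₃) is invertible. -/

import Mathlib

open Matrix

theorem stmt9 (r1 r2 r3 ν12 ν3 : ℝ) (h1 : 0 < r1) (h2 : 0 < r2) (h3 : 0 < r3)
    (h12 : 0 < ν12) (h3' : 0 < ν3) :
    IsUnit (!![0, 0, 1, 1, 0;
               1, 1, 0, 0, 1;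
               -r2, r2, ν12, -ν12, 0;
               r1, r1, 0, 0, -r3;
               -ν12, ν12, -r2, r2, -ν3] : Matrix (Fin 5) (Fin 5) ℝ) := by
  rw [Matrix.isUnit_iff_isUnit_det, isUnit_iff_ne_zero]
  have : (!![0, 0, 1, 1, 0;
               1, 1, 0, 0, 1;
               -r2, r2, ν12, -ν12, 0;
               r1, r1, 0, 0, -r3;
               -ν12, ν12, -r2, r2, -ν3] : Matrix (Fin 5) (Fin 5) ℝ).det
      = 4 * (r1 + r3) * (r2 ^ 2 + ν12 ^ 2) := by
    simp [Matrix.det_succ_row_zero, Fin.sum_univ_succ, Fin.succAbove, Fin.castSucc, Fin.castAdd, Fin.castLE]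
    ring
  rw [this]
  positivity
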